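/- (Polynomial Dehn–Sommerville relation for balanced simplicial complexes, h-version.) Let Δ be a balanced simplicial complex of type a = (a_1, …, a_m) with flag h-numbers (h_b)_{b ≤ a}, and let d = |a|. Then the identity ∑_{b ≤ a} (h_b − h_{a−b}) x^b (1+x)^{a−b} = ∑_{F ∈ Δ} (1 − m_F) x^{b(F)} holds in ℤ[x_1, …, x_m], where (1+x)^c := ∏_j (1+x_j)^{c_j}. -/

import Mathlib

open Finset MvPolynomial

/-- A (finite, abstract) simplicial complex: a finite collection of finite subsets of `V`
containing the empty set and closed under taking subsets. -/
def IsSimplicialComplex {V : Type*} [DecidableEq V] (Δ : Finset (Finset V)) : Prop :=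
  ∅ ∈ Δ ∧ ∀ F ∈ Δ, ∀ G ⊆ F, G ∈ Δ

/-- `Δ` has dimension `d - 1`: every face has at most `d` elements and some face has
exactly `d` elements. -/
def HasDimension {V : Type*} [DecidableEq V] (Δ : Finset (Finset V)) (d : ℕ) : Prop :=
  (∀ F ∈ Δ, F.card ≤ d) ∧ ∃ F ∈ Δ, F.card = d

/-- `fnum Δ i` is the number of faces of `Δ` with exactly `i` elements, i.e. `f_{i-1}`. -/
def fnum {V : Type*} [DecidableEq V] (Δ : Finset (Finset V)) (i : ℕ) : ℕ :=
  (Δ.filter fun F => F.card = i).card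

/-- The multiplicity `m_F = ∑_{G ∈ Δ, F ⊆ G} (−1)^{d−|G|}` of a face `F` of a complex of
dimension `d − 1` (all faces `G` satisfy `|G| ≤ d`, so `d - G.card` is the usual subtraction). -/
def mult {V : Type*} [DecidableEq V] (Δ : Finset (Finset V)) (d : ℕ) (F : Finset V) : ℤ :=
  ∑ G ∈ Δ.filter (fun G => F ⊆ G), (-1 : ℤ) ^ (d - G.card)

/-- The reduced Euler characteristic `χ̃(Γ) = ∑_{G ∈ Γ} (−1)^{|G|−1}`; the exponent is
written `|G| + 1`, which has the same parity as `|G| − 1` (the empty face contributes `−1`). -/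
def chiTilde {V : Type*} [DecidableEq V] (Γ : Finset (Finset V)) : ℤ :=
  ∑ G ∈ Γ, (-1 : ℤ) ^ (G.card + 1)

/-- The link of a face `F` in `Δ`. -/
def link {V : Type*} [DecidableEq V] (Δ : Finset (Finset V)) (F : Finset V) :
    Finset (Finset V) :=
  Δ.filter fun G => G ∩ F = ∅ ∧ G ∪ F ∈ Δ

/-- `Δ` (of dimension `d − 1`) is reciprocal if `m_F ∈ {0, 1}` for every nonempty face. -/
def IsReciprocal {V : Type*} [DecidableEq V] (Δ : Finset (Finset V)) (d : ℕ) : Prop :=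
  ∀ F ∈ Δ, F ≠ ∅ → mult Δ d F = 0 ∨ mult Δ d F = 1

/-- `Δ` (of dimension `d − 1`) is semi-Eulerian if `m_F = 1` for every nonempty face. -/
def IsSemiEulerian {V : Type*} [DecidableEq V] (Δ : Finset (Finset V)) (d : ℕ) : Prop :=
  ∀ F ∈ Δ, F ≠ ∅ → mult Δ d F = 1

/-- `fint Δ d i` is the number of interior faces (nonempty faces with `m_F = 1`) of `Δ`
with exactly `i` elements, i.e. `f^int_{i-1}`. -/
def fint {V : Type*} [DecidableEq V] (Δ : Finset (Finset V)) (d : ℕ) (i : ℕ) : ℕ :=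
  (Δ.filter fun F => F.card = i ∧ F ≠ ∅ ∧ mult Δ d F = 1).card

/-- `bvec κ F j` is the number of vertices of `F` with color `j`. -/
def bvec {V : Type*} [DecidableEq V] {m : ℕ} (κ : V → Fin m) (F : Finset V) (j : Fin m) : ℕ :=
  (F.filter fun v => κ v = j).card

/-- `Δ` is balanced of type `a` with respect to the coloring `κ`: every face of `Δ` that is
maximal under inclusion has exactly `a j` vertices of color `j`, for each color `j`. -/
def IsBalanced {V : Type*} [DecidableEq V] {m : ℕ} (Δ : Finset (Finset V))
    (κ : V → Fin m) (a : Fin m → ℕ) : Prop :=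
  ∀ F ∈ Δ, (∀ G ∈ Δ, F ⊆ G → G = F) → ∀ j, bvec κ F j = a j

section FieldAux
variable {K : Type*} [Field K]

lemma auxA {x : K} (hx : 1 + x ≠ 0) {b c : ℕ} (h : b ≤ c) :
    (x / (1 + x)) ^ b * (1 + x) ^ c = x ^ b * (1 + x) ^ (c - b) := by
  obtain ⟨k, rfl⟩ := Nat.exists_eq_add_of_le h
  rw [Nat.add_sub_cancel_left, pow_add, div_pow]
  field_simp

lemma auxB {x : K} (hx : 1 + x ≠ 0) {b c : ℕ} (h : b ≤ c) :
    (x / (1 + x)) ^ b * (1 - x / (1 + x)) ^ (c - b) * (1 + x) ^ c = x ^ b := by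
  have h1 : 1 - x / (1 + x) = 1 / (1 + x) := by field_simp; ring
  obtain ⟨k, rfl⟩ := Nat.exists_eq_add_of_le h
  rw [h1, Nat.add_sub_cancel_left, pow_add, div_pow, div_pow]
  field_simp
  simp

lemma auxC {x : K} (hx : x ≠ 0) {b c : ℕ} (h : b ≤ c) :
    ((1 + x) / x) ^ b * x ^ c = (1 + x) ^ b * x ^ (c - b) := by
  obtain ⟨k, rfl⟩ := Nat.exists_eq_add_of_le h
  rw [Nat.add_sub_cancel_left, pow_add, div_pow]
  field_simp

lemma auxD {x : K} (hx : x ≠ 0) {b c : ℕ} (h : b ≤ c) :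
    ((1 + x) / x) ^ b * (1 - (1 + x) / x) ^ (c - b) * x ^ c = (-1) ^ (c - b) * (1 + x) ^ b := by
  have h1 : 1 - (1 + x) / x = -1 / x := by field_simp; ring
  obtain ⟨k, rfl⟩ := Nat.exists_eq_add_of_le h
  rw [h1, Nat.add_sub_cancel_left, pow_add, div_pow, div_pow]
  field_simp

end FieldAux

section AuxDS

variable {V : Type*} [DecidableEq V] {m : ℕ}

lemma prod_color (κ : V → Fin m) (F : Finset V) {R : Type*} [CommMonoid R] (w : Fin m → R) :
    ∏ v ∈ F, w (κ v) = ∏ j, w j ^ bvec κ F j := by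
  rw [← Finset.prod_fiberwise_of_maps_to (fun v (_ : v ∈ F) => Finset.mem_univ (κ v))
    (fun v => w (κ v))]
  refine Finset.prod_congr rfl fun j _ => ?_
  rw [bvec, ← Finset.prod_const]
  exact Finset.prod_congr rfl fun v hv => by rw [(Finset.mem_filter.mp hv).2]

lemma card_color (κ : V → Fin m) (F : Finset V) : F.card = ∑ j, bvec κ F j :=
  Finset.card_eq_sum_card_fiberwise fun v _ => Finset.mem_univ (κ v)

lemma bvec_mono (κ : V → Fin m) {F G : Finset V} (h : F ⊆ G) (j : Fin m) :
    bvec κ F j ≤ bvec κ G j :=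
  Finset.card_le_card (Finset.filter_subset_filter _ h)

lemma bvec_le {Δ : Finset (Finset V)} {κ : V → Fin m} {a : Fin m → ℕ}
    (hbal : IsBalanced Δ κ a) {F : Finset V} (hF : F ∈ Δ) (j : Fin m) :
    bvec κ F j ≤ a j := by
  obtain ⟨G, hG, hmax⟩ : ∃ G ∈ Δ.filter (F ⊆ ·), ∀ G' ∈ Δ.filter (F ⊆ ·), ¬ G < G' := by
    obtain ⟨G, hG⟩ := Finset.exists_maximal (s := Δ.filter (F ⊆ ·)) ⟨F, by simp [hF]⟩
    exact ⟨G, hG.1, fun G' hG' hlt => lt_irrefl _ (lt_of_lt_of_le hlt (hG.2 hG' hlt.le))⟩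
  rw [Finset.mem_filter] at hG
  have hGmax : ∀ G' ∈ Δ, G ⊆ G' → G' = G := by
    intro G' hG' hsub
    by_contra hne
    exact hmax G' (Finset.mem_filter.mpr ⟨hG', hG.2.trans hsub⟩)
      (lt_of_le_of_ne hsub (by simpa [eq_comm] using hne))
  calc bvec κ F j ≤ bvec κ G j := bvec_mono κ hG.2 j
    _ = a j := hbal G hG.1 hGmax j

lemma sum_powerset_X (κ : V → Fin m) (G : Finset V) :
    (∑ F ∈ G.powerset, ∏ j, (X j : MvPolynomial (Fin m) ℤ) ^ bvec κ F j)
      = ∏ j, (1 + X j) ^ bvec κ G j := by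
  rw [← prod_color κ G (fun j => (1 + X j : MvPolynomial (Fin m) ℤ))]
  have : ∀ v ∈ G, (1 + X (κ v) : MvPolynomial (Fin m) ℤ) = X (κ v) + 1 := by
    intro v _; ring
  rw [Finset.prod_congr rfl this, Finset.prod_add]
  refine Finset.sum_congr rfl fun t _ => ?_
  simp [prod_color κ t (fun j => (X j : MvPolynomial (Fin m) ℤ))]

lemma mult_sum (Δ : Finset (Finset V)) (hΔ : IsSimplicialComplex Δ) (κ : V → Fin m) (d : ℕ) :
    (∑ F ∈ Δ, C (mult Δ d F) * ∏ j, X j ^ bvec κ F j : MvPolynomial (Fin m) ℤ)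
      = ∑ G ∈ Δ, C ((-1 : ℤ) ^ (d - G.card)) * ∏ j, (1 + X j) ^ bvec κ G j := by
  have step1 : ∀ F ∈ Δ, (C (mult Δ d F) * ∏ j, X j ^ bvec κ F j : MvPolynomial (Fin m) ℤ)
      = ∑ G ∈ Δ.filter (F ⊆ ·), C ((-1 : ℤ) ^ (d - G.card)) * ∏ j, X j ^ bvec κ F j := by
    intro F _
    rw [mult, map_sum, Finset.sum_mul]
  rw [Finset.sum_congr rfl step1]
  rw [Finset.sum_comm' (t' := Δ) (s' := fun G => Δ.filter (· ⊆ G))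
    (by intro F G; simp only [Finset.mem_filter]; tauto)]
  refine Finset.sum_congr rfl fun G hG => ?_
  have hpow : Δ.filter (· ⊆ G) = G.powerset := by
    ext F
    simp only [Finset.mem_filter, Finset.mem_powerset]
    exact ⟨fun h => h.2, fun h => ⟨hΔ.2 G hG F h, h⟩⟩
  rw [hpow, ← Finset.mul_sum, sum_powerset_X]

lemma ne_zero_aux {m : ℕ} (j : Fin m) :
    (1 + X j : MvPolynomial (Fin m) ℤ) ≠ 0 := by
  intro h0
  have := congrArg MvPolynomial.constantCoeff h0
  simp at this

lemma claim1 (Δ : Finset (Finset V)) (κ : V → Fin m) (a : Fin m → ℕ) (h : (Fin m → ℕ) → ℤ)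
    (hble : ∀ F ∈ Δ, ∀ j, bvec κ F j ≤ a j)
    (hh : (∑ b ∈ Finset.Iic a, C (h b) * ∏ j, X j ^ b j : MvPolynomial (Fin m) ℤ)
        = ∑ F ∈ Δ, (∏ j, X j ^ bvec κ F j) * ∏ j, (1 - X j) ^ (a j - bvec κ F j)) :
    (∑ b ∈ Finset.Iic a, C (h b) * (∏ j, X j ^ b j) * ∏ j, (1 + X j) ^ (a j - b j)
        : MvPolynomial (Fin m) ℤ)
      = ∑ F ∈ Δ, ∏ j, X j ^ bvec κ F j := by
  classical
  apply IsFractionRing.injective (MvPolynomial (Fin m) ℤ)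
    (FractionRing (MvPolynomial (Fin m) ℤ))
  set K := FractionRing (MvPolynomial (Fin m) ℤ) with hK
  set ι : MvPolynomial (Fin m) ℤ →+* K := (algebraMap (MvPolynomial (Fin m) ℤ) K) with hι
  have hinj : Function.Injective ι := IsFractionRing.injective _ _
  set x : Fin m → K := fun j => ι (X j) with hx
  have hx1 : ∀ j, (1 : K) + x j ≠ 0 := by
    intro j h0
    refine ne_zero_aux j (hinj ?_)
    rw [map_add, map_one, map_zero]
    exact h0
  set t : Fin m → K := fun j => x j / (1 + x j) with ht
  set P : K := ∏ j, (1 + x j) ^ a j with hP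
  have H : (∑ b ∈ Finset.Iic a, ((h b : K)) * ∏ j, t j ^ b j)
      = ∑ F ∈ Δ, (∏ j, t j ^ bvec κ F j) * ∏ j, ((1 : K) - t j) ^ (a j - bvec κ F j) := by
    have H0 := congrArg (MvPolynomial.aeval t) hh
    simpa only [map_sum, map_mul, map_prod, map_pow, map_sub, map_one, aeval_X, aeval_C,
      algebraMap_int_eq, eq_intCast, map_intCast] using H0
  calc ι (∑ b ∈ Finset.Iic a, C (h b) * (∏ j, X j ^ b j) * ∏ j, (1 + X j) ^ (a j - b j))
      = ∑ b ∈ Finset.Iic a, ((h b : K)) * (∏ j, x j ^ b j) * ∏ j, (1 + x j) ^ (a j - b j) := by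
        rw [map_sum]
        refine Finset.sum_congr rfl fun b _ => ?_
        simp only [map_mul, map_prod, map_pow, map_add, map_one]
        rw [show ι (C (h b)) = ((h b : K)) by rw [eq_intCast MvPolynomial.C, map_intCast]]
    _ = ∑ b ∈ Finset.Iic a, (((h b : K)) * ∏ j, t j ^ b j) * P := by
        refine Finset.sum_congr rfl fun b hb => ?_
        have hba : ∀ j, b j ≤ a j := Finset.mem_Iic.mp hb
        rw [mul_assoc, mul_assoc, hP, ← Finset.prod_mul_distrib, ← Finset.prod_mul_distrib]
        congr 1
        exact Finset.prod_congr rfl fun j _ => (auxA (hx1 j) (hba j)).symm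
    _ = (∑ b ∈ Finset.Iic a, ((h b : K)) * ∏ j, t j ^ b j) * P := by
        rw [Finset.sum_mul]
    _ = (∑ F ∈ Δ, (∏ j, t j ^ bvec κ F j)
          * ∏ j, ((1 : K) - t j) ^ (a j - bvec κ F j)) * P := by rw [H]
    _ = ∑ F ∈ Δ, ((∏ j, t j ^ bvec κ F j)
          * ∏ j, ((1 : K) - t j) ^ (a j - bvec κ F j)) * P := by rw [Finset.sum_mul]
    _ = ∑ F ∈ Δ, ∏ j, x j ^ bvec κ F j := by
        refine Finset.sum_congr rfl fun F hF => ?_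
        rw [hP, ← Finset.prod_mul_distrib, ← Finset.prod_mul_distrib]
        exact Finset.prod_congr rfl fun j _ => auxB (hx1 j) (hble F hF j)
    _ = ι (∑ F ∈ Δ, ∏ j, X j ^ bvec κ F j) := by
        rw [map_sum]
        exact Finset.sum_congr rfl fun F _ => by rw [map_prod]; simp only [map_pow]; rfl

lemma claim2 (Δ : Finset (Finset V)) (κ : V → Fin m) (a : Fin m → ℕ) (h : (Fin m → ℕ) → ℤ)
    (d : ℕ) (hd : d = ∑ j, a j)
    (hble : ∀ F ∈ Δ, ∀ j, bvec κ F j ≤ a j)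
    (hh : (∑ b ∈ Finset.Iic a, C (h b) * ∏ j, X j ^ b j : MvPolynomial (Fin m) ℤ)
        = ∑ F ∈ Δ, (∏ j, X j ^ bvec κ F j) * ∏ j, (1 - X j) ^ (a j - bvec κ F j)) :
    (∑ b ∈ Finset.Iic a, C (h b) * (∏ j, (1 + X j) ^ b j) * ∏ j, X j ^ (a j - b j)
        : MvPolynomial (Fin m) ℤ)
      = ∑ F ∈ Δ, C ((-1 : ℤ) ^ (d - F.card)) * ∏ j, (1 + X j) ^ bvec κ F j := by
  classical
  apply IsFractionRing.injective (MvPolynomial (Fin m) ℤ)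
    (FractionRing (MvPolynomial (Fin m) ℤ))
  set K := FractionRing (MvPolynomial (Fin m) ℤ) with hK
  set ι : MvPolynomial (Fin m) ℤ →+* K := (algebraMap (MvPolynomial (Fin m) ℤ) K) with hι
  have hinj : Function.Injective ι := IsFractionRing.injective _ _
  set x : Fin m → K := fun j => ι (X j) with hx
  have hx0 : ∀ j, x j ≠ 0 := by
    intro j h0
    refine MvPolynomial.X_ne_zero (R := ℤ) j (hinj ?_)
    rw [map_zero]; exact h0
  set u : Fin m → K := fun j => (1 + x j) / x j with hu
  set Q : K := ∏ j, x j ^ a j with hQ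
  have H : (∑ b ∈ Finset.Iic a, ((h b : K)) * ∏ j, u j ^ b j)
      = ∑ F ∈ Δ, (∏ j, u j ^ bvec κ F j) * ∏ j, ((1 : K) - u j) ^ (a j - bvec κ F j) := by
    have H0 := congrArg (MvPolynomial.aeval u) hh
    simpa only [map_sum, map_mul, map_prod, map_pow, map_sub, map_one, aeval_X, aeval_C,
      algebraMap_int_eq, eq_intCast, map_intCast] using H0
  calc ι (∑ b ∈ Finset.Iic a, C (h b) * (∏ j, (1 + X j) ^ b j) * ∏ j, X j ^ (a j - b j))
      = ∑ b ∈ Finset.Iic a, ((h b : K)) * (∏ j, (1 + x j) ^ b j) * ∏ j, x j ^ (a j - b j) := by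
        rw [map_sum]
        refine Finset.sum_congr rfl fun b _ => ?_
        simp only [map_mul, map_prod, map_pow, map_add, map_one]
        rw [show ι (C (h b)) = ((h b : K)) by rw [eq_intCast MvPolynomial.C, map_intCast]]
    _ = ∑ b ∈ Finset.Iic a, (((h b : K)) * ∏ j, u j ^ b j) * Q := by
        refine Finset.sum_congr rfl fun b hb => ?_
        have hba : ∀ j, b j ≤ a j := Finset.mem_Iic.mp hb
        rw [mul_assoc, mul_assoc, hQ, ← Finset.prod_mul_distrib, ← Finset.prod_mul_distrib]
        congr 1
        exact Finset.prod_congr rfl fun j _ => (auxC (hx0 j) (hba j)).symm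
    _ = (∑ b ∈ Finset.Iic a, ((h b : K)) * ∏ j, u j ^ b j) * Q := by
        rw [Finset.sum_mul]
    _ = (∑ F ∈ Δ, (∏ j, u j ^ bvec κ F j)
          * ∏ j, ((1 : K) - u j) ^ (a j - bvec κ F j)) * Q := by rw [H]
    _ = ∑ F ∈ Δ, ((∏ j, u j ^ bvec κ F j)
          * ∏ j, ((1 : K) - u j) ^ (a j - bvec κ F j)) * Q := by rw [Finset.sum_mul]
    _ = ∑ F ∈ Δ, ((-1 : K) ^ (d - F.card)) * ∏ j, (1 + x j) ^ bvec κ F j := by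
        refine Finset.sum_congr rfl fun F hF => ?_
        rw [hQ, ← Finset.prod_mul_distrib, ← Finset.prod_mul_distrib]
        have : ∀ j ∈ Finset.univ, u j ^ bvec κ F j * ((1 : K) - u j) ^ (a j - bvec κ F j)
            * x j ^ a j = (-1 : K) ^ (a j - bvec κ F j) * (1 + x j) ^ bvec κ F j :=
          fun j _ => auxD (hx0 j) (hble F hF j)
        rw [Finset.prod_congr rfl this, Finset.prod_mul_distrib,
          Finset.prod_pow_eq_pow_sum]
        congr 2
        rw [Finset.sum_tsub_distrib _ (fun j _ => hble F hF j), ← hd, ← card_color]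
    _ = ι (∑ F ∈ Δ, C ((-1 : ℤ) ^ (d - F.card)) * ∏ j, (1 + X j) ^ bvec κ F j) := by
        rw [map_sum]
        refine Finset.sum_congr rfl fun F _ => ?_
        simp only [map_mul, map_prod, map_pow, map_add, map_one]
        rw [show ι (MvPolynomial.C (-1 : ℤ)) = (-1 : K) by
          rw [eq_intCast MvPolynomial.C, map_intCast, Int.cast_neg, Int.cast_one]]

lemma reindex_Iic {m : ℕ} (a : Fin m → ℕ) {M : Type*} [AddCommMonoid M]
    (f : (Fin m → ℕ) → M) :
    ∑ b ∈ Finset.Iic a, f b = ∑ b ∈ Finset.Iic a, f (a - b) := by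
  refine Finset.sum_nbij' (fun b => a - b) (fun b => a - b)
    (fun b _ => Finset.mem_Iic.mpr fun j => Nat.sub_le _ _)
    (fun b _ => Finset.mem_Iic.mpr fun j => Nat.sub_le _ _)
    (fun b hb => ?_) (fun b hb => ?_) (fun b hb => ?_)
  · funext j
    have h1 : b j ≤ a j := Finset.mem_Iic.mp hb j
    show a j - (a j - b j) = b j
    omega
  · funext j
    have h1 : b j ≤ a j := Finset.mem_Iic.mp hb j
    show a j - (a j - b j) = b j
    omega
  · have h1 : ∀ j, b j ≤ a j := Finset.mem_Iic.mp hb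
    congr 1
    funext j
    show b j = a j - (a j - b j)
    have := h1 j
    omega


end AuxDS

/-- Polynomial Dehn–Sommerville relation for balanced simplicial complexes, h-version:
`∑_{b ≤ a} (h_b − h_{a−b}) x^b (1+x)^{a−b} = ∑_{F ∈ Δ} (1 − m_F) x^{b(F)}`. -/
theorem flag_polynomial_DS {V : Type*} [DecidableEq V] (Δ : Finset (Finset V)) {m : ℕ}
    (hm : 1 ≤ m) (κ : V → Fin m) (a : Fin m → ℕ) (d : ℕ) (hd : d = ∑ j, a j) (hd1 : 1 ≤ d)
    (hΔ : IsSimplicialComplex Δ) (hbal : IsBalanced Δ κ a)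
    (h : (Fin m → ℕ) → ℤ)
    (hh : (∑ b ∈ Finset.Iic a, C (h b) * ∏ j, X j ^ b j : MvPolynomial (Fin m) ℤ)
        = ∑ F ∈ Δ, (∏ j, X j ^ bvec κ F j) * ∏ j, (1 - X j) ^ (a j - bvec κ F j)) :
    (∑ b ∈ Finset.Iic a, C (h b - h (a - b)) * (∏ j, X j ^ b j) * ∏ j, (1 + X j) ^ (a j - b j)
        : MvPolynomial (Fin m) ℤ)
      = ∑ F ∈ Δ, C (1 - mult Δ d F) * ∏ j, X j ^ bvec κ F j := by
  
  classical
  have hble : ∀ F ∈ Δ, ∀ j, bvec κ F j ≤ a j := fun F hF j => bvec_le hbal hF j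
  have c1 := claim1 Δ κ a h hble hh
  have c2 := claim2 Δ κ a h d hd hble hh
  have msum := mult_sum Δ hΔ κ d
  have split : (∑ b ∈ Finset.Iic a, C (h b - h (a - b)) * (∏ j, X j ^ b j)
        * ∏ j, (1 + X j) ^ (a j - b j) : MvPolynomial (Fin m) ℤ)
      = (∑ b ∈ Finset.Iic a, C (h b) * (∏ j, X j ^ b j) * ∏ j, (1 + X j) ^ (a j - b j))
        - ∑ b ∈ Finset.Iic a, C (h (a - b)) * (∏ j, X j ^ b j)
          * ∏ j, (1 + X j) ^ (a j - b j) := by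
    rw [← Finset.sum_sub_distrib]
    refine Finset.sum_congr rfl fun b _ => ?_
    rw [map_sub]
    ring
  have re : (∑ b ∈ Finset.Iic a, C (h (a - b)) * (∏ j, X j ^ b j)
        * ∏ j, (1 + X j) ^ (a j - b j) : MvPolynomial (Fin m) ℤ)
      = ∑ b ∈ Finset.Iic a, C (h b) * (∏ j, (1 + X j) ^ b j) * ∏ j, X j ^ (a j - b j) := by
    rw [reindex_Iic a
      (fun b => C (h b) * (∏ j, (1 + X j) ^ b j) * ∏ j, X j ^ (a j - b j))]
    refine Finset.sum_congr rfl fun b hb => ?_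
    have hba := Finset.mem_Iic.mp hb
    simp only [Pi.sub_apply]
    rw [Finset.prod_congr rfl
      (fun j (_ : j ∈ Finset.univ) =>
        show (X j : MvPolynomial (Fin m) ℤ) ^ (a j - (a j - b j)) = X j ^ b j by
          rw [Nat.sub_sub_self (hba j)])]
    ring
  rw [split, c1, re, c2, ← msum, ← Finset.sum_sub_distrib]
  refine Finset.sum_congr rfl fun F _ => ?_
  rw [map_sub, map_one]
  ring
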